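/- Let g, σ > 0, let τ̄(λ) = √(gλ + σλ³) for λ > 0, and let λ₀ = √((2√3 − 3)g/(3σ)) be the inflection point of τ̄. If 0 < α ≤ λ₀ ≤ λ and τ̄'(α) = τ̄'(λ), then τ̄(λ + α) < τ̄(λ) + τ̄(α). Consequently the -- interaction for gravity–capillary water waves has no space-time resonances of the form ξ = (λ + α(λ))e₀ with α(λ) ≠ λ. -/

import Mathlib

open Real Set

noncomputable section

set_option maxHeartbeats 1000000

private lemma deriv_tau_aux (g σ x : ℝ) (hg : 0 < g) (hσ : 0 < σ) (hx : 0 < x) :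
    deriv (fun y : ℝ => Real.sqrt (g * y + σ * y ^ 3)) x
      = (g + 3 * σ * x ^ 2) / (2 * Real.sqrt (g * x + σ * x ^ 3)) := by
  have hpos : 0 < g * x + σ * x ^ 3 :=
    add_pos (mul_pos hg hx) (mul_pos hσ (pow_pos hx 3))
  have hinner : HasDerivAt (fun y : ℝ => g * y + σ * y ^ 3) (g + 3 * σ * x ^ 2) x := by
    have h1 := (hasDerivAt_id x).const_mul g
    have h2 := (hasDerivAt_pow 3 x).const_mul σ
    have := h1.add h2
    exact this.congr_deriv (by ring)
  have := hinner.sqrt (ne_of_gt hpos)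
  rw [this.deriv]

private lemma poly_ineq_aux (g σ al l : ℝ) (hg : 0 < g) (hσ : 0 < σ)
    (ha : 0 < al) (hl : 0 < l)
    (hQ : g^3 + g^2*σ*(al^2+l^2) - 5*g^2*σ*al*l - 9*g*σ^2*al*l*(al^2+l^2)
        - 3*g*σ^2*al^2*l^2 - 9*σ^3*al^3*l^3 = 0) :
    9*σ^2*l*al*(l+al)^2 < 4*(g+σ*l^2)*(g+σ*al^2) := by
  have hp : 0 < σ * al * l := by positivity
  have hs : σ * (al - l)^2 ≥ 0 := by positivity
  nlinarith [hQ, hp, hs, mul_pos hg hp, sq_nonneg (3*(σ*al*l) - 2*g),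
    mul_nonneg (le_of_lt hp) (sq_nonneg (3*(σ*al*l) - 2*g)),
    mul_nonneg (mul_nonneg (sq_nonneg g) hs.le) (le_of_lt hp), sq_nonneg g, mul_pos hg hg,
    mul_nonneg (mul_pos hg hg).le hs]

/-- **No resonance in the second subcase of the `--` interaction.** If `0 < α ≤ λ₀ ≤ λ`
and `τ̄'(α) = τ̄'(λ)` (so that `α = α(λ)` is the conjugate point), then
`τ̄(λ + α) < τ̄(λ) + τ̄(α)`, where `τ̄(λ) = √(gλ + σλ³)` and `λ₀` is its inflection point. -/
theorem no_resonance_conjugate_points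
    (g σ : ℝ) (hg : 0 < g) (hσ : 0 < σ)
    (τ : ℝ → ℝ) (hτ : τ = fun l : ℝ => Real.sqrt (g * l + σ * l ^ 3))
    (lam0 : ℝ) (hlam0 : lam0 = Real.sqrt ((2 * Real.sqrt 3 - 3) * g / (3 * σ))) :
    ∀ al l : ℝ, 0 < al → al ≤ lam0 → lam0 ≤ l →
      deriv τ al = deriv τ l →
      τ (l + al) < τ l + τ al := by
  intro al l hal hal0 hl0 hderiv
  -- √3 bounds
  have hs3 : Real.sqrt 3 ^ 2 = 3 := Real.sq_sqrt (by norm_num)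
  have hs3nn : 0 ≤ Real.sqrt 3 := Real.sqrt_nonneg 3
  have hs3lt : Real.sqrt 3 < 7/4 := by nlinarith [sq_nonneg (Real.sqrt 3 - 7/4)]
  have hs3gt : (3:ℝ)/2 < Real.sqrt 3 := by nlinarith [sq_nonneg (Real.sqrt 3 - 3/2)]
  -- positivity of l
  have hl : 0 < l := lt_of_lt_of_le (lt_of_lt_of_le hal hal0) hl0
  -- the radicands
  have hA : 0 < g * al + σ * al ^ 3 :=
    add_pos (mul_pos hg hal) (mul_pos hσ (pow_pos hal 3))
  have hB : 0 < g * l + σ * l ^ 3 :=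
    add_pos (mul_pos hg hl) (mul_pos hσ (pow_pos hl 3))
  have hsA : 0 < Real.sqrt (g * al + σ * al ^ 3) := Real.sqrt_pos.mpr hA
  have hsB : 0 < Real.sqrt (g * l + σ * l ^ 3) := Real.sqrt_pos.mpr hB
  -- rewrite the derivative hypothesis
  rw [hτ] at hderiv
  rw [deriv_tau_aux g σ al hg hσ hal, deriv_tau_aux g σ l hg hσ hl] at hderiv
  -- cross multiply and square
  have hcross : (g + 3 * σ * al ^ 2) * Real.sqrt (g * l + σ * l ^ 3)
      = (g + 3 * σ * l ^ 2) * Real.sqrt (g * al + σ * al ^ 3) := by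
    field_simp at hderiv
    rw [show l * (g + σ * l ^ 2) = g * l + σ * l ^ 3 by ring,
      show al * (g + σ * al ^ 2) = g * al + σ * al ^ 3 by ring] at hderiv
    linarith [hderiv]
  have hkey : (g + 3 * σ * al ^ 2) ^ 2 * (g * l + σ * l ^ 3)
      = (g + 3 * σ * l ^ 2) ^ 2 * (g * al + σ * al ^ 3) := by
    have := congrArg (· ^ 2) hcross
    simp only [mul_pow] at this
    rw [Real.sq_sqrt hB.le, Real.sq_sqrt hA.le] at this
    exact this
  -- factorization: (l - al) * Q = 0
  have hfac : (l - al) * (g^3 + g^2*σ*(al^2+l^2) - 5*g^2*σ*al*l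
      - 9*g*σ^2*al*l*(al^2+l^2) - 3*g*σ^2*al^2*l^2 - 9*σ^3*al^3*l^3) = 0 := by
    linear_combination hkey
  -- the main polynomial inequality
  have hpoly : 9*σ^2*l*al*(l+al)^2 < 4*(g+σ*l^2)*(g+σ*al^2) := by
    rcases mul_eq_zero.mp hfac with h | hQ
    · -- l = al, hence al = lam0 and σ al² = (2√3-3)g/3 < g/2
      have hla : l = al := by linarith
      have hallam : al = lam0 := le_antisymm hal0 (by rw [← hla]; exact hl0)
      have hargnn : 0 ≤ (2 * Real.sqrt 3 - 3) * g / (3 * σ) := by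
        have : 0 < 2 * Real.sqrt 3 - 3 := by nlinarith
        positivity
      have hsq : al ^ 2 = (2 * Real.sqrt 3 - 3) * g / (3 * σ) := by
        rw [hallam, hlam0, Real.sq_sqrt hargnn]
      have hval : σ * al ^ 2 = (2 * Real.sqrt 3 - 3) * g / 3 := by
        rw [hsq]; field_simp
      have hlt : σ * al ^ 2 < g / 2 := by
        rw [hval]
        rw [div_lt_div_iff₀ (by norm_num : (0:ℝ)<3) (by norm_num : (0:ℝ)<2)]
        nlinarith [mul_nonneg (by linarith : (0:ℝ) ≤ 7/4 - Real.sqrt 3) hg.le]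
      rw [hla]
      nlinarith [sq_nonneg (g - σ * al^2), mul_pos hσ (pow_pos hal 2)]
    · exact poly_ineq_aux g σ al l hg hσ hal hl hQ
  -- now conclude
  rw [hτ]
  simp only
  have hRHSpos : 0 < Real.sqrt (g * l + σ * l ^ 3) + Real.sqrt (g * al + σ * al ^ 3) :=
    add_pos hsB hsA
  rw [show Real.sqrt (g * l + σ * l ^ 3) + Real.sqrt (g * al + σ * al ^ 3)
      = Real.sqrt ((Real.sqrt (g * l + σ * l ^ 3) + Real.sqrt (g * al + σ * al ^ 3)) ^ 2)
    from (Real.sqrt_sq hRHSpos.le).symm]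
  apply Real.sqrt_lt_sqrt (by positivity)
  -- expand the square
  have hexp : (Real.sqrt (g * l + σ * l ^ 3) + Real.sqrt (g * al + σ * al ^ 3)) ^ 2
      = (g * l + σ * l ^ 3) + (g * al + σ * al ^ 3)
        + 2 * (Real.sqrt (g * l + σ * l ^ 3) * Real.sqrt (g * al + σ * al ^ 3)) := by
    rw [add_sq, Real.sq_sqrt hB.le, Real.sq_sqrt hA.le]; ring
  rw [hexp]
  have hsplit : g * (l + al) + σ * (l + al) ^ 3
      = (g * l + σ * l ^ 3) + (g * al + σ * al ^ 3) + 3 * σ * l * al * (l + al) := by ring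
  rw [hsplit]
  have hmid : 3 * σ * l * al * (l + al)
      < 2 * (Real.sqrt (g * l + σ * l ^ 3) * Real.sqrt (g * al + σ * al ^ 3)) := by
    apply lt_of_pow_lt_pow_left₀ 2 (by positivity)
    have : (2 * (Real.sqrt (g * l + σ * l ^ 3) * Real.sqrt (g * al + σ * al ^ 3))) ^ 2
        = 4 * ((g * l + σ * l ^ 3) * (g * al + σ * al ^ 3)) := by
      rw [mul_pow, mul_pow, Real.sq_sqrt hB.le, Real.sq_sqrt hA.le]; ring
    rw [this]
    have := mul_lt_mul_of_pos_left hpoly (mul_pos hl hal)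
    calc (3 * σ * l * al * (l + al)) ^ 2
        = (l * al) * (9*σ^2*l*al*(l+al)^2) := by ring
      _ < (l * al) * (4*(g+σ*l^2)*(g+σ*al^2)) := this
      _ = 4 * ((g * l + σ * l ^ 3) * (g * al + σ * al ^ 3)) := by ring
  linarith
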